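/- arXiv:1107.2846 — 3 statements merged into one kernel-verified Lean document; each statement's English description precedes it below -/
import Mathlib

section
/- If P is a finite poset of order dimension d ≥ 2 that is not a chain, then led(P) ≥ (2/d)·inc(P), where led(P) is the linear extension diameter, i.e., RR(P) ≥ 2/d. -/
/-- `L` is a linear extension of the partial order on `α`. -/
def IsLinearExtension {α : Type*} [PartialOrder α] (L : LinearOrder α) : Prop :=
  ∀ x y : α, x ≤ y → L.le x y

/-- The distance between two linear orders: the number of ordered pairs `(x,y)`
with `x < y` in `L1` and `y < x` in `L2`. -/
noncomputable def extDist {α : Type*} (L1 L2 : LinearOrder α) : ℕ :=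
  {p : α × α | L1.lt p.1 p.2 ∧ L2.lt p.2 p.1}.ncard

/-- The number of unordered incomparable pairs of the poset `α`. -/
noncomputable def numInc (α : Type*) [PartialOrder α] : ℕ :=
  {p : α × α | ¬ p.1 ≤ p.2 ∧ ¬ p.2 ≤ p.1}.ncard / 2

/-- A family of `d` linear extensions is a realizer if the intersection of the
linear extensions is exactly the partial order. -/
def IsRealizer {α : Type*} [PartialOrder α] {d : ℕ} (R : Fin d → LinearOrder α) : Prop :=
  (∀ i, IsLinearExtension (R i)) ∧ ∀ x y : α, (∀ i, (R i).le x y) → x ≤ y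

/-- If a finite poset that is not a chain has order dimension exactly `d ≥ 2`, then
`led(P) ≥ (2/d)·inc(P)`: there exist linear extensions `L1, L2` with
`2·inc(P) ≤ d·dist(L1,L2)`, i.e. `RR(P) ≥ 2/d`. -/
theorem led_ge_two_div_dim {α : Type*} [Fintype α] [PartialOrder α] (d : ℕ) (hd : 2 ≤ d)
    (hnotchain : ∃ x y : α, ¬ x ≤ y ∧ ¬ y ≤ x)
    (hdim_le : ∃ R : Fin d → LinearOrder α, IsRealizer R)
    (hdim_ge : ∀ e < d, ¬ ∃ R : Fin e → LinearOrder α, IsRealizer R) :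
    ∃ L1 L2 : LinearOrder α, IsLinearExtension L1 ∧ IsLinearExtension L2 ∧
      2 * numInc α ≤ d * extDist L1 L2 := by
  classical
  obtain ⟨R, hRext, hRreal⟩ := hdim_le
  set S : Finset (α × α) := Finset.univ.filter (fun p => ¬ p.1 ≤ p.2 ∧ ¬ p.2 ≤ p.1) with hS
  set T : Finset (Fin d × Fin d) := Finset.univ.offDiag with hT
  have hTne : T.Nonempty := by
    refine ⟨(⟨0, by omega⟩, ⟨1, by omega⟩), ?_⟩
    simp [hT, Finset.mem_offDiag, Fin.ext_iff]
  set f : Fin d × Fin d → ℕ :=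
    fun q => (S.filter (fun p => (R q.1).lt p.1 p.2 ∧ (R q.2).lt p.2 p.1)).card with hf
  obtain ⟨q0, hq0T, hq0max⟩ := T.exists_max_image f hTne
  have hlt_of_nle : ∀ (i : Fin d) (x y : α), ¬ (R i).le y x → (R i).lt x y := by
    intro i x y h
    have hle : (R i).le x y := ((R i).le_total x y).resolve_right h
    exact ((R i).lt_iff_le_not_ge x y).mpr ⟨hle, h⟩
  have hnot_both : ∀ (i : Fin d) (x y : α), (R i).lt x y → ¬ (R i).lt y x := by
    intro i x y hxy hyx
    exact (((R i).lt_iff_le_not_ge x y).mp hxy).2 (((R i).lt_iff_le_not_ge y x).mp hyx).1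
  -- key lower bound on the total sum of distances
  have key : (d - 1) * S.card ≤ ∑ q ∈ T, f q := by
    have hswap : ∑ q ∈ T, f q
        = ∑ p ∈ S, (T.filter (fun q => (R q.1).lt p.1 p.2 ∧ (R q.2).lt p.2 p.1)).card := by
      simp_rw [hf, Finset.card_filter]
      exact Finset.sum_comm
    have hbound : ∀ p ∈ S,
        d - 1 ≤ (T.filter (fun q => (R q.1).lt p.1 p.2 ∧ (R q.2).lt p.2 p.1)).card := by
      intro p hp
      rw [hS, Finset.mem_filter] at hp
      obtain ⟨-, h12, h21⟩ := hp
      have hne : p.1 ≠ p.2 := fun h => h12 (h ▸ le_refl p.1)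
      set A : Finset (Fin d) := Finset.univ.filter (fun i => (R i).lt p.1 p.2) with hA
      set B : Finset (Fin d) := Finset.univ.filter (fun i => (R i).lt p.2 p.1) with hB
      have hABunion : A ∪ B = Finset.univ := by
        apply Finset.eq_univ_of_forall
        intro i
        rw [Finset.mem_union, hA, hB, Finset.mem_filter, Finset.mem_filter]
        rcases (R i).le_total p.1 p.2 with h | h
        · exact Or.inl ⟨Finset.mem_univ i, ((R i).lt_iff_le_not_ge p.1 p.2).mpr
            ⟨h, fun h' => hne ((R i).le_antisymm _ _ h h')⟩⟩
        · exact Or.inr ⟨Finset.mem_univ i, ((R i).lt_iff_le_not_ge p.2 p.1).mpr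
            ⟨h, fun h' => hne ((R i).le_antisymm _ _ h' h)⟩⟩
      have hABdisj : Disjoint A B := by
        rw [Finset.disjoint_left]
        intro i hiA hiB
        rw [hA, Finset.mem_filter] at hiA
        rw [hB, Finset.mem_filter] at hiB
        exact hnot_both i p.1 p.2 hiA.2 hiB.2
      have hcard : A.card + B.card = d := by
        rw [← Finset.card_union_of_disjoint hABdisj, hABunion]
        simp
      have hAne : 1 ≤ A.card := by
        have : ¬ ∀ i, (R i).le p.2 p.1 := fun h => h21 (hRreal p.2 p.1 h)
        push_neg at this
        obtain ⟨i, hi⟩ := this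
        refine Finset.card_pos.mpr ⟨i, ?_⟩
        rw [hA, Finset.mem_filter]
        exact ⟨Finset.mem_univ i, hi⟩
      have hBne : 1 ≤ B.card := by
        have : ¬ ∀ i, (R i).le p.1 p.2 := fun h => h12 (hRreal p.1 p.2 h)
        push_neg at this
        obtain ⟨i, hi⟩ := this
        refine Finset.card_pos.mpr ⟨i, ?_⟩
        rw [hB, Finset.mem_filter]
        exact ⟨Finset.mem_univ i, hi⟩
      have hsub : A ×ˢ B ⊆ T.filter (fun q => (R q.1).lt p.1 p.2 ∧ (R q.2).lt p.2 p.1) := by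
        intro q hq
        rw [Finset.mem_product] at hq
        rw [hA, Finset.mem_filter] at hq
        have hq2 := hq.2
        rw [hB, Finset.mem_filter] at hq2
        rw [Finset.mem_filter]
        refine ⟨?_, hq.1.2, hq2.2⟩
        rw [hT, Finset.mem_offDiag]
        refine ⟨Finset.mem_univ _, Finset.mem_univ _, ?_⟩
        intro hcontra
        exact hnot_both q.1 p.1 p.2 hq.1.2 (hcontra ▸ hq2.2)
      obtain ⟨a', ha'⟩ := Nat.exists_eq_add_of_le hAne
      obtain ⟨b', hb'⟩ := Nat.exists_eq_add_of_le hBne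
      calc d - 1 = 1 + a' + b' := by omega
        _ ≤ (1 + a' + b') + a' * b' := Nat.le_add_right _ _
        _ = (1 + a') * (1 + b') := by ring
        _ = A.card * B.card := by rw [ha', hb']
        _ = (A ×ˢ B).card := (Finset.card_product A B).symm
        _ ≤ _ := Finset.card_le_card hsub
    calc (d - 1) * S.card = S.card * (d - 1) := mul_comm _ _
      _ = ∑ _p ∈ S, (d - 1) := by rw [Finset.sum_const, smul_eq_mul]
      _ ≤ ∑ p ∈ S, (T.filter (fun q => (R q.1).lt p.1 p.2 ∧ (R q.2).lt p.2 p.1)).card :=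
          Finset.sum_le_sum hbound
      _ = ∑ q ∈ T, f q := hswap.symm
  -- upper bound via the max
  have up : ∑ q ∈ T, f q ≤ T.card * f q0 := by
    have := Finset.sum_le_card_nsmul T f (f q0) (fun q hq => hq0max q hq)
    simpa using this
  have hTcard : T.card = (d - 1) * d := by
    rw [hT, Finset.offDiag_card, Finset.card_univ, Fintype.card_fin, Nat.sub_mul, one_mul]
  have hScard : S.card ≤ d * f q0 := by
    have h1 : (d - 1) * S.card ≤ (d - 1) * (d * f q0) := by
      calc (d - 1) * S.card ≤ T.card * f q0 := le_trans key up
        _ = (d - 1) * (d * f q0) := by rw [hTcard, mul_assoc]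
    exact Nat.le_of_mul_le_mul_left h1 (by omega)
  -- identify the pieces
  refine ⟨R q0.1, R q0.2, hRext q0.1, hRext q0.2, ?_⟩
  have hdist : extDist (R q0.1) (R q0.2) = f q0 := by
    have hset : {p : α × α | (R q0.1).lt p.1 p.2 ∧ (R q0.2).lt p.2 p.1}
        = ↑(S.filter (fun p => (R q0.1).lt p.1 p.2 ∧ (R q0.2).lt p.2 p.1)) := by
      ext p
      simp only [Set.mem_setOf_eq, Finset.coe_filter, hS, Finset.mem_filter, Finset.mem_univ,
        true_and, Set.mem_setOf_eq]
      constructor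
      · intro hc
        refine ⟨⟨?_, ?_⟩, hc⟩
        · intro h
          exact (((R q0.2).lt_iff_le_not_ge p.2 p.1).mp hc.2).2 (hRext q0.2 p.1 p.2 h)
        · intro h
          exact (((R q0.1).lt_iff_le_not_ge p.1 p.2).mp hc.1).2 (hRext q0.1 p.2 p.1 h)
      · exact fun h => h.2
    rw [extDist, hset, Set.ncard_coe_finset, hf]
  have hinc : numInc α = S.card / 2 := by
    have hset : {p : α × α | ¬ p.1 ≤ p.2 ∧ ¬ p.2 ≤ p.1} = ↑S := by
      ext p; simp [hS]
    rw [numInc, hset, Set.ncard_coe_finset]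
  rw [hdist, hinc]
  calc 2 * (S.card / 2) = S.card / 2 * 2 := mul_comm _ _
    _ ≤ S.card := Nat.div_mul_le_self _ _
    _ ≤ d * f q0 := hScard
end

section
/- For t ≥ 3 and k ≥ 3, led(Z_{t,k}) ≥ (t − 1 + ⌈(t−2)/2⌉)·C(k,2), and consequently RR(Z_{t,k}) ≥ (t − 1 + ⌈(t−2)/2⌉)/(2t−3) ≥ 3/4. -/
/-- The order of the poset `Z_{t,k}`: element `a_{i,j}` is coded as `(i,j) : Fin t × Fin k`.
Blocks at distance at least 3 are fully comparable; within a block and between blocks at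
distance 1 or 2 we have `a_{i,j} ≤ a_{i',j'}` iff `j ≤ j'`.  This is the transitive
closure of the chains within blocks, the covers `a_{i,j} < a_{i+1,j}`, and full
comparability between sufficiently distant blocks. -/
def Zle (t k : ℕ) (x y : Fin t × Fin k) : Prop :=
  ((x.1 : ℕ) ≤ y.1 ∧ (y.1 : ℕ) ≤ (x.1 : ℕ) + 2 ∧ (x.2 : ℕ) ≤ y.2) ∨ (x.1 : ℕ) + 3 ≤ y.1

/-- `Z_{t,k}` as a partial order on `Fin t × Fin k`. -/
def Zorder (t k : ℕ) : PartialOrder (Fin t × Fin k) where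
  le := Zle t k
  lt a b := Zle t k a b ∧ ¬ Zle t k b a
  lt_iff_le_not_ge _ _ := Iff.rfl
  le_refl x := Or.inl ⟨le_refl _, by omega, le_refl _⟩
  le_trans x y z hxy hyz := by
    rcases hxy with ⟨a1, a2, a3⟩ | a
    · rcases hyz with ⟨b1, b2, b3⟩ | b
      · by_cases hz : (z.1 : ℕ) ≤ (x.1 : ℕ) + 2
        · exact Or.inl ⟨by omega, hz, by omega⟩
        · exact Or.inr (by omega)
      · exact Or.inr (by omega)
    · rcases hyz with ⟨b1, b2, b3⟩ | b
      · exact Or.inr (by omega)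
      · exact Or.inr (by omega)
  le_antisymm x y hxy hyx := by
    rcases hxy with ⟨a1, a2, a3⟩ | a
    · rcases hyx with ⟨b1, b2, b3⟩ | b
      · have h1 : x.1 = y.1 := Fin.ext (by omega)
        have h2 : x.2 = y.2 := Fin.ext (by omega)
        exact Prod.ext h1 h2
      · omega
    · rcases hyx with ⟨b1, b2, b3⟩ | b
      · omega
      · omega

/- ### Auxiliary machinery for the lower-bound construction -/

-- Group/offset data for the first linear extension `L1`:
-- singleton blocks {0}, {1}; triples {4q+2,4q+3,4q+4}; singletons {4q+5}.
def Lg1 (i : ℕ) : ℕ := if i < 2 then i else 2 + 2*((i-2)/4) + (if (i-2)%4 = 3 then 1 else 0)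
def Lo1 (i : ℕ) : ℕ := if i < 2 then 0 else if (i-2)%4 = 3 then 0 else (i-2)%4
-- Group/offset data for `L2`: triples {4q,4q+1,4q+2}; singletons {4q+3}.
def Lg2 (i : ℕ) : ℕ := 2*(i/4) + (if i%4 = 3 then 1 else 0)
def Lo2 (i : ℕ) : ℕ := if i%4 = 3 then 0 else i%4

lemma Lo1_lt (i : ℕ) : Lo1 i < 3 := by unfold Lo1; split_ifs <;> omega
lemma Lo2_lt (i : ℕ) : Lo2 i < 3 := by unfold Lo2; split_ifs <;> omega

lemma win1 (i i' : ℕ) (h : i ≤ i') (h2 : i' ≤ i + 2) :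
    Lg1 i < Lg1 i' ∨ (Lg1 i = Lg1 i' ∧ Lo1 i ≤ Lo1 i') := by
  unfold Lg1 Lo1; split_ifs <;> omega

lemma win2 (i i' : ℕ) (h : i ≤ i') (h2 : i' ≤ i + 2) :
    Lg2 i < Lg2 i' ∨ (Lg2 i = Lg2 i' ∧ Lo2 i ≤ Lo2 i') := by
  unfold Lg2 Lo2; split_ifs <;> omega

lemma far1 (i i' : ℕ) (h : i + 3 ≤ i') : Lg1 i < Lg1 i' := by
  unfold Lg1; split_ifs <;> omega
lemma far2 (i i' : ℕ) (h : i + 3 ≤ i') : Lg2 i < Lg2 i' := by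
  unfold Lg2; split_ifs <;> omega

lemma inj1 (i i' : ℕ) (h : Lg1 i = Lg1 i') (h2 : Lo1 i = Lo1 i') : i = i' := by
  unfold Lg1 Lo1 at *; split_ifs at * <;> omega
lemma inj2 (i i' : ℕ) (h : Lg2 i = Lg2 i') (h2 : Lo2 i = Lo2 i') : i = i' := by
  unfold Lg2 Lo2 at *; split_ifs at * <;> omega

lemma c1 {i : ℕ} (h : i % 4 < 2) : Lg1 i < Lg1 (i+1) := by unfold Lg1; split_ifs <;> omega
lemma c2 {i : ℕ} (h : i % 4 < 2) : Lg2 i = Lg2 (i+1) ∧ Lo2 (i+1) = Lo2 i + 1 := by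
  unfold Lg2 Lo2; split_ifs <;> omega
lemma c3 {i : ℕ} (h : 2 ≤ i % 4) : Lg1 i = Lg1 (i+1) ∧ Lo1 (i+1) = Lo1 i + 1 := by
  unfold Lg1 Lo1; split_ifs <;> omega
lemma c4 {i : ℕ} (h : 2 ≤ i % 4) : Lg2 i < Lg2 (i+1) := by unfold Lg2; split_ifs <;> omega
lemma c5 {i : ℕ} (h : i % 4 = 0) : Lg1 i < Lg1 (i+2) := by unfold Lg1; split_ifs <;> omega
lemma c6 {i : ℕ} (h : i % 4 = 0) : Lg2 i = Lg2 (i+2) ∧ Lo2 (i+2) = Lo2 i + 2 := by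
  unfold Lg2 Lo2; split_ifs <;> omega
lemma c7 {i : ℕ} (h : i % 4 = 2) : Lg1 i = Lg1 (i+2) ∧ Lo1 (i+2) = Lo1 i + 2 := by
  unfold Lg1 Lo1; split_ifs <;> omega
lemma c8 {i : ℕ} (h : i % 4 = 2) : Lg2 i < Lg2 (i+2) := by unfold Lg2; split_ifs <;> omega

/-- position function: `g i * (3k) + (3j + o i)` -/
def Zpos (g o : ℕ → ℕ) (k i j : ℕ) : ℕ := g i * (3*k) + (3*j + o i)

lemma key_lt {k g g' x y : ℕ} (hg : g < g') (hx : x < 3*k) :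
    g*(3*k) + x < g'*(3*k) + y := by
  have h1 : (g+1)*(3*k) ≤ g'*(3*k) := Nat.mul_le_mul_right _ hg
  have h2 : (g+1)*(3*k) = g*(3*k) + 3*k := by ring
  omega

lemma key_eq {k g g' x y : ℕ} (h : g*(3*k) + x = g'*(3*k) + y)
    (hx : x < 3*k) (hy : y < 3*k) : g = g' ∧ x = y := by
  rcases lt_trichotomy g g' with h'|h'|h'
  · have := key_lt (k := k) (y := y) h' hx; omega
  · subst h'; omega
  · have := key_lt (k := k) (y := x) h' hy; omega

lemma Zpos_inj {g o : ℕ → ℕ} (ho : ∀ i, o i < 3)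
    (hgo : ∀ i i', g i = g i' → o i = o i' → i = i')
    {k i j i' j' : ℕ} (hj : j < k) (hj' : j' < k)
    (h : Zpos g o k i j = Zpos g o k i' j') : i = i' ∧ j = j' := by
  unfold Zpos at h
  have h1 := key_eq h (by have := ho i; omega) (by have := ho i'; omega)
  have := ho i; have := ho i'
  have : i = i' := hgo _ _ h1.1 (by omega)
  omega

/-- The linear order on `Fin t × Fin k` obtained from group/offset data. -/
noncomputable def Lord (t k : ℕ) (g o : ℕ → ℕ) (ho : ∀ i, o i < 3)
    (hgo : ∀ i i', g i = g i' → o i = o i' → i = i') : LinearOrder (Fin t × Fin k) :=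
  LinearOrder.lift' (fun x => Zpos g o k x.1.val x.2.val) (by
    intro x y h
    have := Zpos_inj ho hgo x.2.isLt y.2.isLt h
    exact Prod.ext (Fin.ext this.1) (Fin.ext this.2))

lemma Lord_lt (t k : ℕ) (g o : ℕ → ℕ) (ho : ∀ i, o i < 3)
    (hgo : ∀ i i', g i = g i' → o i = o i' → i = i') (x y : Fin t × Fin k) :
    (Lord t k g o ho hgo).lt x y ↔ Zpos g o k x.1.val x.2.val < Zpos g o k y.1.val y.2.val :=
  Iff.rfl

lemma Lord_ext (t k : ℕ) (g o : ℕ → ℕ) (ho : ∀ i, o i < 3)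
    (hgo : ∀ i i', g i = g i' → o i = o i' → i = i')
    (hwin : ∀ i i', i ≤ i' → i' ≤ i + 2 → g i < g i' ∨ (g i = g i' ∧ o i ≤ o i'))
    (hfar : ∀ i i', i + 3 ≤ i' → g i < g i') :
    @IsLinearExtension _ (Zorder t k) (Lord t k g o ho hgo) := by
  intro x y hxy
  show Zpos g o k x.1.val x.2.val ≤ Zpos g o k y.1.val y.2.val
  rcases hxy with ⟨h1, h2, h3⟩ | h
  · rcases hwin _ _ h1 h2 with hg | ⟨hg, hoo⟩
    · exact le_of_lt (key_lt hg (by have := ho x.1.val; have := x.2.isLt; omega))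
    · unfold Zpos; rw [hg]; omega
  · exact le_of_lt (key_lt (hfar _ _ h) (by have := ho x.1.val; have := x.2.isLt; omega))

/-- The four reversal patterns, stated numerically. -/
lemma revA {k i j j' : ℕ} (hj : j < k) (hj' : j' < j) (hm : i % 4 < 2) :
    Zpos Lg1 Lo1 k i j < Zpos Lg1 Lo1 k (i+1) j' ∧
    Zpos Lg2 Lo2 k (i+1) j' < Zpos Lg2 Lo2 k i j := by
  refine ⟨key_lt (c1 hm) (by have := Lo1_lt i; omega), ?_⟩
  unfold Zpos; rw [← (c2 hm).1, (c2 hm).2]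
  exact Nat.add_lt_add_left (by omega) _

lemma revB {k i j j' : ℕ} (hj : j < k) (hj' : j' < j) (hm : 2 ≤ i % 4) :
    Zpos Lg1 Lo1 k (i+1) j' < Zpos Lg1 Lo1 k i j ∧
    Zpos Lg2 Lo2 k i j < Zpos Lg2 Lo2 k (i+1) j' := by
  refine ⟨?_, key_lt (c4 hm) (by have := Lo2_lt i; omega)⟩
  unfold Zpos; rw [← (c3 hm).1, (c3 hm).2]
  exact Nat.add_lt_add_left (by omega) _

lemma revC {k i j j' : ℕ} (hj : j < k) (hj' : j' < j) (hm : i % 4 = 0) :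
    Zpos Lg1 Lo1 k i j < Zpos Lg1 Lo1 k (i+2) j' ∧
    Zpos Lg2 Lo2 k (i+2) j' < Zpos Lg2 Lo2 k i j := by
  refine ⟨key_lt (c5 hm) (by have := Lo1_lt i; omega), ?_⟩
  unfold Zpos; rw [← (c6 hm).1, (c6 hm).2]
  exact Nat.add_lt_add_left (by omega) _

lemma revD {k i j j' : ℕ} (hj : j < k) (hj' : j' < j) (hm : i % 4 = 2) :
    Zpos Lg1 Lo1 k (i+2) j' < Zpos Lg1 Lo1 k i j ∧
    Zpos Lg2 Lo2 k i j < Zpos Lg2 Lo2 k (i+2) j' := by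
  refine ⟨?_, key_lt (c8 hm) (by have := Lo2_lt i; omega)⟩
  unfold Zpos; rw [← (c7 hm).1, (c7 hm).2]
  exact Nat.add_lt_add_left (by omega) _

/-- Numeric version of the map indexing the reversed pairs. -/
def fnum (t : ℕ) (a : ℕ × Σ _ : ℕ, ℕ) : (ℕ × ℕ) × (ℕ × ℕ) :=
  if a.1 < t - 1 then
    (if a.1 % 4 < 2 then ((a.1, a.2.1), (a.1+1, a.2.2)) else ((a.1+1, a.2.2), (a.1, a.2.1)))
  else
    (if (2*(a.1 - (t-1))) % 4 = 0 then
      ((2*(a.1 - (t-1)), a.2.1), (2*(a.1 - (t-1))+2, a.2.2))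
     else ((2*(a.1 - (t-1))+2, a.2.2), (2*(a.1 - (t-1)), a.2.1)))

lemma fnum_bounds {t k : ℕ} (ht : 3 ≤ t) {a : ℕ × Σ _ : ℕ, ℕ}
    (h1 : a.1 < t - 1 + (t-1)/2) (h2 : a.2.2 < a.2.1) (h3 : a.2.1 < k) :
    (fnum t a).1.1 < t ∧ (fnum t a).2.1 < t ∧ (fnum t a).1.2 < k ∧ (fnum t a).2.2 < k := by
  unfold fnum; split_ifs <;> refine ⟨?_, ?_, ?_, ?_⟩ <;> simp <;> omega

lemma fnum_rev {t k : ℕ} (ht : 3 ≤ t) {a : ℕ × Σ _ : ℕ, ℕ}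
    (h1 : a.1 < t - 1 + (t-1)/2) (h2 : a.2.2 < a.2.1) (h3 : a.2.1 < k) :
    Zpos Lg1 Lo1 k (fnum t a).1.1 (fnum t a).1.2 < Zpos Lg1 Lo1 k (fnum t a).2.1 (fnum t a).2.2 ∧
    Zpos Lg2 Lo2 k (fnum t a).2.1 (fnum t a).2.2 < Zpos Lg2 Lo2 k (fnum t a).1.1 (fnum t a).1.2 := by
  unfold fnum; split_ifs with hd hm hm
  · exact revA h3 h2 hm
  · exact revB h3 h2 (by omega)
  · exact revC h3 h2 hm
  · exact revD h3 h2 (by omega)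

lemma fnum_injOn {t : ℕ} (ht : 3 ≤ t) {a b : ℕ × Σ _ : ℕ, ℕ}
    (ha1 : a.1 < t - 1 + (t-1)/2) (hb1 : b.1 < t - 1 + (t-1)/2)
    (h : fnum t a = fnum t b) : a = b := by
  obtain ⟨a1, j1, j1'⟩ := a
  obtain ⟨b1, j2, j2'⟩ := b
  unfold fnum at h
  split_ifs at h <;>
    simp only [Prod.mk.injEq] at h <;>
    · obtain ⟨⟨e1, e2⟩, e3, e4⟩ := h
      have : a1 = b1 ∧ j1 = j2 ∧ j1' = j2' := by omega
      obtain ⟨rfl, rfl, rfl⟩ := this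
      rfl

/-- For `t, k ≥ 3`, `led(Z_{t,k}) ≥ (t − 1 + ⌈(t−2)/2⌉)·C(k,2)` (note
`⌈(t−2)/2⌉ = (t−1)/2` in natural-number division), and consequently
`RR(Z_{t,k}) ≥ (t − 1 + ⌈(t−2)/2⌉)/(2t−3) ≥ 3/4`, i.e. `4·dist ≥ 3·inc` where
`inc(Z_{t,k}) = (2t−3)·C(k,2)`. -/
theorem led_Z_lower_bound (t k : ℕ) (ht : 3 ≤ t) (hk : 3 ≤ k) :
    ∃ L1 L2 : LinearOrder (Fin t × Fin k),
      @IsLinearExtension _ (Zorder t k) L1 ∧ @IsLinearExtension _ (Zorder t k) L2 ∧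
      (t - 1 + (t - 1) / 2) * k.choose 2 ≤ extDist L1 L2 ∧
      3 * ((2 * t - 3) * k.choose 2) ≤ 4 * extDist L1 L2 := by
  haveI : NeZero t := ⟨by omega⟩
  haveI : NeZero k := ⟨by omega⟩
  set L1 : LinearOrder (Fin t × Fin k) := Lord t k Lg1 Lo1 Lo1_lt inj1 with hL1
  set L2 : LinearOrder (Fin t × Fin k) := Lord t k Lg2 Lo2 Lo2_lt inj2 with hL2
  set M : ℕ := t - 1 + (t - 1) / 2 with hM
  -- the index set
  set dom : Finset (ℕ × Σ _ : ℕ, ℕ) :=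
    Finset.range M ×ˢ (Finset.range k).sigma (fun j => Finset.range j) with hdom
  have hdomcard : dom.card = M * k.choose 2 := by
    rw [hdom, Finset.card_product, Finset.card_range, Finset.card_sigma]
    simp only [Finset.card_range]
    rw [Finset.sum_range_id, Nat.choose_two_right]
  -- the injection into the set of reversed pairs
  set f : (ℕ × Σ _ : ℕ, ℕ) → (Fin t × Fin k) × (Fin t × Fin k) := open Fin.NatCast in fun a =>
    ((((fnum t a).1.1 : Fin t), ((fnum t a).1.2 : Fin k)),
     (((fnum t a).2.1 : Fin t), ((fnum t a).2.2 : Fin k))) with hf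
  have hmem : ∀ a ∈ dom, a.1 < M ∧ a.2.2 < a.2.1 ∧ a.2.1 < k := by
    intro a ha
    rw [hdom, Finset.mem_product, Finset.mem_sigma] at ha
    obtain ⟨h1, h2, h3⟩ := ha
    exact ⟨Finset.mem_range.1 h1, Finset.mem_range.1 h3, Finset.mem_range.1 h2⟩
  have key : M * k.choose 2 ≤ extDist L1 L2 := by
    rw [← hdomcard]
    unfold extDist
    rw [← Set.ncard_coe_finset dom]
    refine Set.ncard_le_ncard_of_injOn f ?_ ?_ (Set.toFinite _)
    · intro a ha
      obtain ⟨h1, h2, h3⟩ := hmem a (Finset.mem_coe.1 ha)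
      obtain ⟨b1, b2, b3, b4⟩ := fnum_bounds ht h1 h2 h3
      obtain ⟨r1, r2⟩ := fnum_rev (k := k) ht h1 h2 h3
      constructor
      · rw [hL1, Lord_lt]
        simpa only [hf, Fin.val_cast_of_lt b1, Fin.val_cast_of_lt b2,
          Fin.val_cast_of_lt b3, Fin.val_cast_of_lt b4] using r1
      · rw [hL2, Lord_lt]
        simpa only [hf, Fin.val_cast_of_lt b1, Fin.val_cast_of_lt b2,
          Fin.val_cast_of_lt b3, Fin.val_cast_of_lt b4] using r2
    · intro a ha b hb h
      obtain ⟨ha1, ha2, ha3⟩ := hmem a (Finset.mem_coe.1 ha)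
      obtain ⟨hb1, hb2, hb3⟩ := hmem b (Finset.mem_coe.1 hb)
      obtain ⟨a1, a2, a3, a4⟩ := fnum_bounds ht ha1 ha2 ha3
      obtain ⟨c1, c2, c3, c4⟩ := fnum_bounds ht hb1 hb2 hb3
      apply fnum_injOn ht ha1 hb1
      rw [hf] at h
      simp only [Prod.mk.injEq] at h
      obtain ⟨⟨e1, e2⟩, e3, e4⟩ := h
      have v1 := congrArg Fin.val e1
      have v2 := congrArg Fin.val e2
      have v3 := congrArg Fin.val e3
      have v4 := congrArg Fin.val e4
      rw [Fin.val_cast_of_lt a1, Fin.val_cast_of_lt c1] at v1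
      rw [Fin.val_cast_of_lt a3, Fin.val_cast_of_lt c3] at v2
      rw [Fin.val_cast_of_lt a2, Fin.val_cast_of_lt c2] at v3
      rw [Fin.val_cast_of_lt a4, Fin.val_cast_of_lt c4] at v4
      exact Prod.ext (Prod.ext v1 v2) (Prod.ext v3 v4)
  refine ⟨L1, L2, ?_, ?_, key, ?_⟩
  · exact Lord_ext t k Lg1 Lo1 Lo1_lt inj1 win1 far1
  · exact Lord_ext t k Lg2 Lo2 Lo2_lt inj2 win2 far2
  · have h1 : 3 * (2 * t - 3) ≤ 4 * M := by rw [hM]; omega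
    calc 3 * ((2 * t - 3) * k.choose 2) = (3 * (2 * t - 3)) * k.choose 2 := by ring
      _ ≤ (4 * M) * k.choose 2 := Nat.mul_le_mul_right _ h1
      _ = 4 * (M * k.choose 2) := by ring
      _ ≤ 4 * extDist L1 L2 := Nat.mul_le_mul_left _ key
end

section
/- In the poset W_k (a stack of k standard examples S_3), no pair of linear extensions reverses all 6 of the incomparable pairs (a_i,b_i), (a_i,c_i), (b_i,c_i), (a_{i−1},b_i), (b_{i−1},c_i), (c_{i−1},a_i) for a fixed i ≥ 1; hence led(W_k) ≤ 5k + 3 while inc(W_k) = 6k + 3, giving RR(W_k) ≤ (5k+3)/(6k+3). -/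
/-- A pair of linear orders reverses the incomparable pair `{x,y}` if the pair appears
in opposite orders in the two linear orders. -/
def Reverses {α : Type*} (L1 L2 : LinearOrder α) (x y : α) : Prop :=
  (L1.lt x y ∧ L2.lt y x) ∨ (L1.lt y x ∧ L2.lt x y)

/-- The order of `W_k`, the stack of `k` standard examples: elements `a_i, b_i, c_i`
are coded as `(i,0), (i,1), (i,2) : Fin (k+1) × Fin 3`.  Each level is an antichain,
levels at distance at least 2 are fully comparable, and all of level `i` is below all
of level `i+1` except for the three incomparable pairs `(a_i, b_{i+1})`,
`(b_i, c_{i+1})`, `(c_i, a_{i+1})`. -/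
def Wle (k : ℕ) (x y : Fin (k + 1) × Fin 3) : Prop :=
  x = y ∨ ((y.1 : ℕ) = (x.1 : ℕ) + 1 ∧ (y.2 : ℕ) ≠ ((x.2 : ℕ) + 1) % 3) ∨
    (x.1 : ℕ) + 2 ≤ y.1

/-- `W_k` as a partial order. -/
def Worder (k : ℕ) : PartialOrder (Fin (k + 1) × Fin 3) where
  le := Wle k
  lt a b := Wle k a b ∧ ¬ Wle k b a
  lt_iff_le_not_ge _ _ := Iff.rfl
  le_refl x := Or.inl rfl
  le_trans x y z hxy hyz := by
    rcases hxy with rfl | (⟨a1, a2⟩ | a)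
    · exact hyz
    · rcases hyz with rfl | (⟨b1, b2⟩ | b)
      · exact Or.inr (Or.inl ⟨a1, a2⟩)
      · exact Or.inr (Or.inr (by omega))
      · exact Or.inr (Or.inr (by omega))
    · rcases hyz with rfl | (⟨b1, b2⟩ | b)
      · exact Or.inr (Or.inr a)
      · exact Or.inr (Or.inr (by omega))
      · exact Or.inr (Or.inr (by omega))
  le_antisymm x y hxy hyx := by
    rcases hxy with rfl | (⟨a1, a2⟩ | a)
    · rfl
    · rcases hyx with rfl | (⟨b1, b2⟩ | b)
      · rfl
      · omega
      · omega
    · rcases hyx with rfl | (⟨b1, b2⟩ | b)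
      · rfl
      · omega
      · omega

section Helpers

variable {α : Type*}

lemma llt_trans (L : LinearOrder α) {a b c : α} (h1 : L.lt a b) (h2 : L.lt b c) : L.lt a c := by
  letI := L; exact lt_trans h1 h2

lemma llt_asymm (L : LinearOrder α) {a b : α} (h1 : L.lt a b) (h2 : L.lt b a) : False := by
  letI := L; exact absurd h2 (lt_asymm h1)

lemma llt_of_le_of_lt (L : LinearOrder α) {a b c : α} (h1 : L.le a b) (h2 : L.lt b c) : L.lt a c := by
  letI := L; exact lt_of_le_of_lt h1 h2

lemma llt_of_lt_of_le (L : LinearOrder α) {a b c : α} (h1 : L.lt a b) (h2 : L.le b c) : L.lt a c := by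
  letI := L; exact lt_of_lt_of_le h1 h2

lemma llt_irrefl (L : LinearOrder α) {a : α} (h : L.lt a a) : False := by
  letI := L; exact lt_irrefl a h

lemma llt_trichotomy (L : LinearOrder α) (a b : α) : L.lt a b ∨ a = b ∨ L.lt b a := by
  letI := L; exact lt_trichotomy a b

lemma rev_symm {L1 L2 : LinearOrder α} {x y : α} (h : Reverses L1 L2 x y) :
    Reverses L1 L2 y x := h.symm

end Helpers

instance WleDec {k : ℕ} (x y : Fin (k+1) × Fin 3) : Decidable (Wle k x y) := by
  unfold Wle; infer_instance

/-- Characterization of incomparability in `W_k`. -/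
lemma inc_shape {k : ℕ} {x y : Fin (k+1) × Fin 3}
    (h : ¬ Wle k x y ∧ ¬ Wle k y x) :
    ((x.1 : ℕ) = (y.1 : ℕ) ∧ (x.2 : ℕ) ≠ (y.2 : ℕ)) ∨
    ((y.1 : ℕ) = (x.1 : ℕ) + 1 ∧ (y.2 : ℕ) = ((x.2 : ℕ) + 1) % 3) ∨
    ((x.1 : ℕ) = (y.1 : ℕ) + 1 ∧ (x.2 : ℕ) = ((y.2 : ℕ) + 1) % 3) := by
  obtain ⟨h1, h2⟩ := h
  unfold Wle at h1 h2
  rw [Prod.ext_iff, Fin.ext_iff, Fin.ext_iff] at h1 h2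
  push_neg at h1 h2
  have := x.2.isLt
  have := y.2.isLt
  omega
/-- Core argument: if `w ≤ x` and `w ≤ z` in the poset, `x <₁ y <₁ z`, and both the
pair `{y,z}` and the pair `{w,y}` are reversed, contradiction. -/
lemma six {k : ℕ} (L1 L2 : LinearOrder (Fin (k+1) × Fin 3))
    (hL1 : ∀ a b, Wle k a b → L1.le a b) (hL2 : ∀ a b, Wle k a b → L2.le a b)
    {x y z w : Fin (k+1) × Fin 3}
    (hwx : Wle k w x) (hwz : Wle k w z)
    (hxy : L1.lt x y) (hyz : L1.lt y z)
    (ryz : Reverses L1 L2 y z) (rwy : Reverses L1 L2 w y) : False := by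
  have hzy : L2.lt z y := by
    rcases ryz with ⟨h1, h2⟩ | ⟨h1, h2⟩
    · exact h2
    · exact absurd hyz (fun hh => llt_asymm L1 h1 hh)
  have hwy1 : L1.lt w y := llt_of_le_of_lt L1 (hL1 w x hwx) hxy
  have hyw2 : L2.lt y w := by
    rcases rwy with ⟨h1, h2⟩ | ⟨h1, h2⟩
    · exact h2
    · exact absurd hwy1 (fun hh => llt_asymm L1 h1 hh)
  exact llt_irrefl L2 (llt_of_lt_of_le L2 (llt_trans L2 hzy hyw2) (hL2 w z hwz))

lemma not_all_six {k : ℕ} (L1 L2 : LinearOrder (Fin (k+1) × Fin 3))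
    (hL1 : ∀ a b, Wle k a b → L1.le a b) (hL2 : ∀ a b, Wle k a b → L2.le a b)
    (j : ℕ) (hj : j + 1 ≤ k) :
    ¬ (Reverses L1 L2 (⟨j + 1, by omega⟩, 0) (⟨j + 1, by omega⟩, 1) ∧
       Reverses L1 L2 (⟨j + 1, by omega⟩, 0) (⟨j + 1, by omega⟩, 2) ∧
       Reverses L1 L2 (⟨j + 1, by omega⟩, 1) (⟨j + 1, by omega⟩, 2) ∧
       Reverses L1 L2 (⟨j, by omega⟩, 0) (⟨j + 1, by omega⟩, 1) ∧
       Reverses L1 L2 (⟨j, by omega⟩, 1) (⟨j + 1, by omega⟩, 2) ∧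
       Reverses L1 L2 (⟨j, by omega⟩, 2) (⟨j + 1, by omega⟩, 0)) := by
  rintro ⟨r1, r2, r3, r4, r5, r6⟩
  set a : Fin (k+1) × Fin 3 := (⟨j + 1, by omega⟩, 0) with ha
  set b : Fin (k+1) × Fin 3 := (⟨j + 1, by omega⟩, 1) with hb
  set c : Fin (k+1) × Fin 3 := (⟨j + 1, by omega⟩, 2) with hc
  set a' : Fin (k+1) × Fin 3 := (⟨j, by omega⟩, 0) with ha'
  set b' : Fin (k+1) × Fin 3 := (⟨j, by omega⟩, 1) with hb'
  set c' : Fin (k+1) × Fin 3 := (⟨j, by omega⟩, 2) with hc'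
  have haa : Wle k a' a := Or.inr (Or.inl ⟨rfl, by simp [ha, ha']⟩)
  have hac : Wle k a' c := Or.inr (Or.inl ⟨rfl, by simp [hc, ha']⟩)
  have hba : Wle k b' a := Or.inr (Or.inl ⟨rfl, by simp [ha, hb']⟩)
  have hbb : Wle k b' b := Or.inr (Or.inl ⟨rfl, by simp [hb, hb']⟩)
  have hcb : Wle k c' b := Or.inr (Or.inl ⟨rfl, by simp [hb, hc']⟩)
  have hcc : Wle k c' c := Or.inr (Or.inl ⟨rfl, by simp [hc, hc']⟩)
  have hab_ne : a ≠ b := by simp [ha, hb]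
  have hac_ne : a ≠ c := by simp [ha, hc]
  have hbc_ne : b ≠ c := by simp [hb, hc]
  rcases llt_trichotomy L1 a b with h1 | h1 | h1
  · rcases llt_trichotomy L1 b c with h2 | h2 | h2
    · -- a < b < c, middle b, use a'
      exact six L1 L2 hL1 hL2 haa hac h1 h2 r3 r4
    · exact hbc_ne h2
    · rcases llt_trichotomy L1 a c with h3 | h3 | h3
      · -- a < c < b, middle c, use b'
        exact six L1 L2 hL1 hL2 hba hbb h3 h2 (rev_symm r3) r5
      · exact hac_ne h3
      · -- c < a < b, middle a, use c'
        exact six L1 L2 hL1 hL2 hcc hcb h3 h1 r1 r6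
  · exact hab_ne h1
  · rcases llt_trichotomy L1 b c with h2 | h2 | h2
    · rcases llt_trichotomy L1 a c with h3 | h3 | h3
      · -- b < a < c, middle a, use c'
        exact six L1 L2 hL1 hL2 hcb hcc h1 h3 r2 r6
      · exact hac_ne h3
      · -- b < c < a, middle c, use b'
        exact six L1 L2 hL1 hL2 hbb hba h2 h3 (rev_symm r2) r5
    · exact hbc_ne h2
    · -- c < b < a, middle b, use a'
      exact six L1 L2 hL1 hL2 hac haa h2 h1 (rev_symm r1) r4
/-- The finset of ordered incomparable pairs. -/
def incF (k : ℕ) : Finset ((Fin (k+1) × Fin 3) × (Fin (k+1) × Fin 3)) :=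
  Finset.univ.filter (fun p => ¬ Wle k p.1 p.2 ∧ ¬ Wle k p.2 p.1)

/-- Generator of all ordered incomparable pairs. -/
def gen {k : ℕ} (z : ((Fin (k+1) ⊕ Fin k) × Fin 3) × Bool) :
    (Fin (k+1) × Fin 3) × (Fin (k+1) × Fin 3) :=
  match z with
  | ((.inl i, m), b) => if b then ((i, m+1), (i, m+2)) else ((i, m+2), (i, m+1))
  | ((.inr j, c), b) => if b then ((j.castSucc, c), (j.succ, c+1))
      else ((j.succ, c+1), (j.castSucc, c))

/-- Index (with orientation) of an ordered pair. -/
def idxb {k : ℕ} (p : (Fin (k+1) × Fin 3) × (Fin (k+1) × Fin 3)) :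
    ((Fin (k+1) ⊕ Fin k) × Fin 3) × Bool :=
  if h0 : p.1.1 = p.2.1 then
    ((Sum.inl p.1.1, -(p.1.2 + p.2.2)), decide (p.1.2 = -(p.1.2 + p.2.2) + 1))
  else if h1 : (p.1.1 : ℕ) < (p.2.1 : ℕ) then
    ((Sum.inr ⟨p.1.1, by have := p.2.1.isLt; omega⟩, p.1.2), true)
  else
    ((Sum.inr ⟨p.2.1, by
        have := p.1.1.isLt
        have hne : (p.1.1 : ℕ) ≠ (p.2.1 : ℕ) := fun hh => h0 (Fin.ext hh)
        omega⟩, p.2.2), false)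

/-- Index (forgetting orientation). -/
def idx {k : ℕ} (p : (Fin (k+1) × Fin 3) × (Fin (k+1) × Fin 3)) :
    (Fin (k+1) ⊕ Fin k) × Fin 3 :=
  (idxb p).1

lemma idxb_gen {k : ℕ} (z : ((Fin (k+1) ⊕ Fin k) × Fin 3) × Bool) : idxb (gen z) = z := by
  rcases z with ⟨⟨i | j, m⟩, b⟩ <;> rcases b
  · -- inl, false
    have h1 : -((m+2) + (m+1)) = m := by revert m; decide
    have h2 : (m+2 = -((m+2) + (m+1)) + 1) = False := by revert m; decide
    simp [gen, idxb, h1, h2]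
  · have h1 : -((m+1) + (m+2)) = m := by revert m; decide
    have h2 : (m+1 = -((m+1) + (m+2)) + 1) = True := by revert m; decide
    simp [gen, idxb, h1, h2]
  · -- inr, false
    have hne : (j.succ : Fin (k+1)) ≠ j.castSucc := by
      intro hh; have := congrArg Fin.val hh; simp at this
    have hlt : ¬ ((j.succ : Fin (k+1)) : ℕ) < (j.castSucc : ℕ) := by simp
    simp [gen, idxb, hne, hlt]
  · have hne : (j.castSucc : Fin (k+1)) ≠ j.succ := by
      intro hh; have := congrArg Fin.val hh; simp at this
    have hlt : ((j.castSucc : Fin (k+1)) : ℕ) < (j.succ : ℕ) := by simp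
    simp [gen, idxb, hne, hlt]

lemma gen_inj {k : ℕ} : Function.Injective (gen (k := k)) :=
  Function.LeftInverse.injective idxb_gen
lemma gen_mem_incF {k : ℕ} (z : ((Fin (k+1) ⊕ Fin k) × Fin 3) × Bool) :
    gen z ∈ incF k := by
  simp only [incF, Finset.mem_filter, Finset.mem_univ, true_and]
  rcases z with ⟨⟨i | j, m⟩, b⟩ <;> rcases b <;>
    simp only [gen, if_true, if_false, Bool.false_eq_true]
  · constructor <;>
    · rintro (h | ⟨h1, h2⟩ | h)
      · have h2 := congrArg (fun p => ((p.2 : Fin 3) : ℕ)) h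
        have := m.isLt; simp [Fin.val_add] at h2
        all_goals omega
      · simp at h1
      · simp at h
  · constructor <;>
    · rintro (h | ⟨h1, h2⟩ | h)
      · have h2 := congrArg (fun p => ((p.2 : Fin 3) : ℕ)) h
        have := m.isLt; simp [Fin.val_add] at h2
        all_goals omega
      · simp at h1
      · simp at h
  · constructor
    · rintro (h | ⟨h1, h2⟩ | h)
      · have h2 := congrArg (fun p => ((p.1 : Fin (k+1)) : ℕ)) h
        simp at h2
      · simp at h1 <;> omega
      · simp at h <;> omega
    · rintro (h | ⟨h1, h2⟩ | h)
      · have h2 := congrArg (fun p => ((p.1 : Fin (k+1)) : ℕ)) h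
        simp at h2
      · apply h2
        have := m.isLt; simp [Fin.val_add] <;> omega
      · simp at h <;> omega
  · constructor
    · rintro (h | ⟨h1, h2⟩ | h)
      · have h2 := congrArg (fun p => ((p.1 : Fin (k+1)) : ℕ)) h
        simp at h2
      · apply h2
        have := m.isLt; simp [Fin.val_add] <;> omega
      · simp at h <;> omega
    · rintro (h | ⟨h1, h2⟩ | h)
      · have h2 := congrArg (fun p => ((p.1 : Fin (k+1)) : ℕ)) h
        simp at h2
      · simp at h1 <;> omega
      · simp at h <;> omega

lemma incF_subset_gen {k : ℕ} {p : (Fin (k+1) × Fin 3) × (Fin (k+1) × Fin 3)}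
    (hp : p ∈ incF k) : ∃ z, gen z = p := by
  simp only [incF, Finset.mem_filter, Finset.mem_univ, true_and] at hp
  obtain ⟨⟨x1, x2⟩, ⟨y1, y2⟩⟩ := p
  dsimp only at hp
  rcases inc_shape hp with ⟨h1, h2⟩ | ⟨h1, h2⟩ | ⟨h1, h2⟩ <;> dsimp only at h1 h2
  · -- same level
    have hxy : x1 = y1 := Fin.ext h1
    have hne : x2 ≠ y2 := fun hh => h2 (congrArg Fin.val hh)
    have key : ∀ c d : Fin 3, c ≠ d → ∃ m : Fin 3, ∃ b : Bool,
        (if b then ((m+1 : Fin 3), (m+2 : Fin 3)) else (m+2, m+1)) = (c, d) := by decide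
    obtain ⟨m, b, hmb⟩ := key x2 y2 hne
    refine ⟨((.inl x1, m), b), ?_⟩
    rcases b <;> simp only [if_true, if_false, Bool.false_eq_true, Prod.mk.injEq] at hmb <;>
      simp [gen, hmb.1, hmb.2, hxy]
  · -- x below y
    have hk : (x1 : ℕ) < k := by have := y1.isLt; omega
    refine ⟨((.inr ⟨x1, hk⟩, x2), true), ?_⟩
    simp only [gen, if_true]
    refine Prod.ext (Prod.ext ?_ rfl) (Prod.ext ?_ ?_)
    · exact Fin.ext (by simp)
    · exact Fin.ext (by simp; omega)
    · exact Fin.ext (by have := x2.isLt; simp [Fin.val_add, h2] <;> omega)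
  · -- y below x
    have hk : (y1 : ℕ) < k := by have := x1.isLt; omega
    refine ⟨((.inr ⟨y1, hk⟩, y2), false), ?_⟩
    simp only [gen, if_false, Bool.false_eq_true]
    refine Prod.ext (Prod.ext ?_ ?_) (Prod.ext ?_ rfl)
    · exact Fin.ext (by simp; omega)
    · exact Fin.ext (by have := y2.isLt; simp [Fin.val_add, h2] <;> omega)
    · exact Fin.ext (by simp)

lemma incF_eq_image {k : ℕ} : incF k = Finset.univ.image (gen (k := k)) := by
  ext p
  simp only [Finset.mem_image, Finset.mem_univ, true_and]
  constructor
  · exact fun h => incF_subset_gen h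
  · rintro ⟨z, rfl⟩; exact gen_mem_incF z

lemma incF_card {k : ℕ} : (incF k).card = 12 * k + 6 := by
  rw [incF_eq_image, Finset.card_image_of_injective _ gen_inj]
  simp [Finset.card_univ]
  ring
lemma idx_gen {k : ℕ} (z : ((Fin (k+1) ⊕ Fin k) × Fin 3) × Bool) : idx (gen z) = z.1 := by
  rw [idx, idxb_gen]

lemma gen_swap {k : ℕ} (w : (Fin (k+1) ⊕ Fin k) × Fin 3) :
    gen (w, true) = ((gen (w, false)).2, (gen (w, false)).1) := by
  rcases w with ⟨i | j, m⟩ <;> simp [gen]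

lemma idx_eq_swap {k : ℕ} {p q : (Fin (k+1) × Fin 3) × (Fin (k+1) × Fin 3)}
    (hp : p ∈ incF k) (hq : q ∈ incF k) (h : idx p = idx q) :
    p = q ∨ p = (q.2, q.1) := by
  obtain ⟨z, rfl⟩ := incF_subset_gen hp
  obtain ⟨z', rfl⟩ := incF_subset_gen hq
  rw [idx_gen, idx_gen] at h
  obtain ⟨w, b⟩ := z
  obtain ⟨w', b'⟩ := z'
  dsimp at h
  subst h
  rcases b <;> rcases b'
  · exact Or.inl rfl
  · exact Or.inr (by rw [gen_swap])
  · exact Or.inr (by rw [gen_swap])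
  · exact Or.inl rfl

lemma llt_not_le {α : Type*} (L : LinearOrder α) {a b : α} (h : L.lt a b) (h2 : L.le b a) :
    False := by
  letI := L; exact absurd h2 (not_le_of_gt h)

/-- In `W_k`, the stack of `k` standard examples: `inc(W_k) = 6k + 3`, and for any pair
of linear extensions, for each level `j + 1` (with `j < k`) the six incomparable pairs
`(a_{j+1},b_{j+1})`, `(a_{j+1},c_{j+1})`, `(b_{j+1},c_{j+1})`, `(a_j,b_{j+1})`,
`(b_j,c_{j+1})`, `(c_j,a_{j+1})` are never all reversed; hence
`led(W_k) ≤ 5k + 3` and so `RR(W_k) ≤ (5k+3)/(6k+3)`. -/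
theorem RR_W_upper (k : ℕ) :
    @numInc (Fin (k + 1) × Fin 3) (Worder k) = 6 * k + 3 ∧
    ∀ L1 L2 : LinearOrder (Fin (k + 1) × Fin 3),
      @IsLinearExtension _ (Worder k) L1 → @IsLinearExtension _ (Worder k) L2 →
      (∀ j : ℕ, (hj : j < k) →
        ¬ (Reverses L1 L2 (⟨j + 1, by omega⟩, 0) (⟨j + 1, by omega⟩, 1) ∧
           Reverses L1 L2 (⟨j + 1, by omega⟩, 0) (⟨j + 1, by omega⟩, 2) ∧
           Reverses L1 L2 (⟨j + 1, by omega⟩, 1) (⟨j + 1, by omega⟩, 2) ∧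
           Reverses L1 L2 (⟨j, by omega⟩, 0) (⟨j + 1, by omega⟩, 1) ∧
           Reverses L1 L2 (⟨j, by omega⟩, 1) (⟨j + 1, by omega⟩, 2) ∧
           Reverses L1 L2 (⟨j, by omega⟩, 2) (⟨j + 1, by omega⟩, 0))) ∧
      extDist L1 L2 ≤ 5 * k + 3 := by
  
  classical
  constructor
  · -- counting all incomparable pairs
    have h1 : ({p : (Fin (k+1) × Fin 3) × (Fin (k+1) × Fin 3) |
        ¬ Wle k p.1 p.2 ∧ ¬ Wle k p.2 p.1} : Set _).ncard / 2 = 6 * k + 3 := by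
      have hset : ({p : (Fin (k+1) × Fin 3) × (Fin (k+1) × Fin 3) |
          ¬ Wle k p.1 p.2 ∧ ¬ Wle k p.2 p.1} : Set _) = ↑(incF k) := by
        ext p; simp [incF]
      rw [hset, Set.ncard_coe_finset, incF_card]
      omega
    exact h1
  · intro L1 L2 hL1 hL2
    have hL1' : ∀ a b, Wle k a b → L1.le a b := hL1
    have hL2' : ∀ a b, Wle k a b → L2.le a b := hL2
    refine ⟨fun j hj => not_all_six L1 L2 hL1' hL2' j hj, ?_⟩
    set G := (incF k).filter (fun p => L1.lt p.1 p.2 ∧ L2.lt p.2 p.1) with hG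
    have hGmem : ∀ p, p ∈ G ↔ ((¬ Wle k p.1 p.2 ∧ ¬ Wle k p.2 p.1) ∧
        (L1.lt p.1 p.2 ∧ L2.lt p.2 p.1)) := by
      intro p; simp [hG, incF, Finset.mem_filter, and_assoc]
    have hdist : extDist L1 L2 = G.card := by
      unfold extDist
      have hseteq : {p : (Fin (k+1) × Fin 3) × (Fin (k+1) × Fin 3) |
          L1.lt p.1 p.2 ∧ L2.lt p.2 p.1} = ↑G := by
        ext p
        simp only [Set.mem_setOf_eq, Finset.mem_coe, hGmem]
        constructor
        · rintro ⟨h1, h2⟩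
          refine ⟨⟨fun hw => llt_not_le L2 h2 (hL2' _ _ hw),
                   fun hw => llt_not_le L1 h1 (hL1' _ _ hw)⟩, h1, h2⟩
        · rintro ⟨_, h⟩; exact h
      rw [hseteq, Set.ncard_coe_finset]
    rw [hdist]
    have hinj : Set.InjOn (idx (k := k)) ↑G := by
      intro p hp q hq h
      rw [Finset.mem_coe] at hp hq
      have hp' : p ∈ incF k := Finset.mem_of_mem_filter p hp
      have hq' : q ∈ incF k := Finset.mem_of_mem_filter q hq
      rcases idx_eq_swap hp' hq' h with h | h
      · exact h
      · exfalso
        have l1 := ((hGmem p).1 hp).2.1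
        have l2 := ((hGmem q).1 hq).2.1
        rw [h] at l1
        exact llt_asymm L1 l1 l2
    have hcard_img : (G.image idx).card = G.card := Finset.card_image_of_injOn hinj
    have key : ∀ (x y : Fin (k+1) × Fin 3) (z : ((Fin (k+1) ⊕ Fin k) × Fin 3) × Bool),
        (x, y) = gen z → ¬ Reverses L1 L2 x y → z.1 ∉ G.image idx := by
      intro x y z hz hrev hmem
      obtain ⟨p, hpG, hpidx⟩ := Finset.mem_image.1 hmem
      have hp' : p ∈ incF k := Finset.mem_of_mem_filter p hpG
      have hxy : (x, y) ∈ incF k := by rw [hz]; exact gen_mem_incF z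
      have hii : idx p = idx (x, y) := by rw [hpidx, hz, idx_gen]
      have hlt := ((hGmem p).1 hpG).2
      rcases idx_eq_swap hp' hxy hii with h | h
      · rw [h] at hlt; exact hrev (Or.inl hlt)
      · rw [h] at hlt; exact hrev (Or.inr ⟨hlt.1, hlt.2⟩)
    have hex : ∀ j : Fin k, ∃ e : (Fin (k+1) ⊕ Fin k) × Fin 3,
        (e.1 = Sum.inl ⟨(j : ℕ) + 1, by omega⟩ ∨ e.1 = Sum.inr j) ∧ e ∉ G.image idx := by
      intro j
      have hj : (j : ℕ) < k := j.isLt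
      have hj1 : (j : ℕ) + 1 < k + 1 := by omega
      have h6 := not_all_six L1 L2 hL1' hL2' j hj
      by_cases c1 : Reverses L1 L2 (⟨(j:ℕ)+1, hj1⟩, 0) (⟨(j:ℕ)+1, hj1⟩, 1)
      case neg =>
        refine ⟨(Sum.inl ⟨(j:ℕ)+1, hj1⟩, 2), Or.inl rfl,
          key _ _ ((Sum.inl ⟨(j:ℕ)+1, hj1⟩, 2), true) ?_ c1⟩
        simp only [gen, if_true]
        exact Prod.ext (Prod.ext rfl (by dsimp only; decide)) (Prod.ext rfl (by dsimp only; decide))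
      by_cases c2 : Reverses L1 L2 (⟨(j:ℕ)+1, hj1⟩, 0) (⟨(j:ℕ)+1, hj1⟩, 2)
      case neg =>
        refine ⟨(Sum.inl ⟨(j:ℕ)+1, hj1⟩, 1), Or.inl rfl,
          key _ _ ((Sum.inl ⟨(j:ℕ)+1, hj1⟩, 1), false) ?_ c2⟩
        simp only [gen, if_false, Bool.false_eq_true]
        exact Prod.ext (Prod.ext rfl (by dsimp only; decide)) (Prod.ext rfl (by dsimp only; decide))
      by_cases c3 : Reverses L1 L2 (⟨(j:ℕ)+1, hj1⟩, 1) (⟨(j:ℕ)+1, hj1⟩, 2)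
      case neg =>
        refine ⟨(Sum.inl ⟨(j:ℕ)+1, hj1⟩, 0), Or.inl rfl,
          key _ _ ((Sum.inl ⟨(j:ℕ)+1, hj1⟩, 0), true) ?_ c3⟩
        simp only [gen, if_true]
        exact Prod.ext (Prod.ext rfl (by dsimp only; decide)) (Prod.ext rfl (by dsimp only; decide))
      by_cases c4 : Reverses L1 L2 (⟨(j:ℕ), by omega⟩, 0) (⟨(j:ℕ)+1, hj1⟩, 1)
      case neg =>
        refine ⟨(Sum.inr j, 0), Or.inr rfl,
          key _ _ ((Sum.inr j, 0), true) ?_ c4⟩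
        simp only [gen, if_true]
        exact Prod.ext (Prod.ext (Fin.ext (by simp)) rfl)
          (Prod.ext (Fin.ext (by simp)) (by dsimp only; decide))
      by_cases c5 : Reverses L1 L2 (⟨(j:ℕ), by omega⟩, 1) (⟨(j:ℕ)+1, hj1⟩, 2)
      case neg =>
        refine ⟨(Sum.inr j, 1), Or.inr rfl,
          key _ _ ((Sum.inr j, 1), true) ?_ c5⟩
        simp only [gen, if_true]
        exact Prod.ext (Prod.ext (Fin.ext (by simp)) rfl)
          (Prod.ext (Fin.ext (by simp)) (by dsimp only; decide))
      by_cases c6 : Reverses L1 L2 (⟨(j:ℕ), by omega⟩, 2) (⟨(j:ℕ)+1, hj1⟩, 0)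
      case neg =>
        refine ⟨(Sum.inr j, 2), Or.inr rfl,
          key _ _ ((Sum.inr j, 2), true) ?_ c6⟩
        simp only [gen, if_true]
        exact Prod.ext (Prod.ext (Fin.ext (by simp)) rfl)
          (Prod.ext (Fin.ext (by simp)) (by dsimp only; decide))
      exact absurd ⟨c1, c2, c3, c4, c5, c6⟩ h6
    choose e he1 he2 using hex
    have einj : Function.Injective e := by
      intro j j' h
      rcases he1 j with h1 | h1 <;> rcases he1 j' with h2 | h2 <;> rw [h, h2] at h1
      · have := Sum.inl.inj h1
        have := congrArg Fin.val this
        simp at this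
        exact Fin.ext (by omega)
      · exact absurd h1 (by simp)
      · exact absurd h1 (by simp)
      · exact (Sum.inr.inj h1).symm
    have hEcard : (Finset.univ.image e).card = k := by
      rw [Finset.card_image_of_injective _ einj, Finset.card_univ, Fintype.card_fin]
    have hsub : G.image idx ⊆ Finset.univ \ Finset.univ.image e := by
      intro s hs
      rw [Finset.mem_sdiff]
      refine ⟨Finset.mem_univ s, fun hmem => ?_⟩
      obtain ⟨j, _, rfl⟩ := Finset.mem_image.1 hmem
      exact he2 j hs
    have hle := Finset.card_le_card hsub
    rw [Finset.card_sdiff_of_subset (Finset.subset_univ _), hEcard, Finset.card_univ] at hle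
    simp only [Fintype.card_prod, Fintype.card_sum, Fintype.card_fin] at hle
    omega
end
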